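/- If all covariance matrices are equal (Σ_i = Σ for all i), then every critical point of the normal mixture g lies in the convex hull of the component means μ_1, ..., μ_K. -/

import Mathlib

open Matrix

noncomputable def gauss (D : ℕ) (μ : Fin D → ℝ) (S : Matrix (Fin D) (Fin D) ℝ)
    (x : Fin D → ℝ) : ℝ :=
  (Real.sqrt ((2 * Real.pi) ^ D * S.det))⁻¹ *
    Real.exp (-((x - μ) ⬝ᵥ (S⁻¹ *ᵥ (x - μ))) / 2)

noncomputable def bilA (D : ℕ) (A : Matrix (Fin D) (Fin D) ℝ) :
    (Fin D → ℝ) →L[ℝ] (Fin D → ℝ) →L[ℝ] ℝ :=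
  LinearMap.toContinuousLinearMap <|
    (LinearMap.toContinuousLinearMap.toLinearMap).comp <|
      LinearMap.mk₂ ℝ (fun u v => u ⬝ᵥ A *ᵥ v)
        (fun u u' v => by simp [add_dotProduct])
        (fun c u v => by simp [smul_dotProduct])
        (fun u v v' => by simp [Matrix.mulVec_add, dotProduct_add])
        (fun c u v => by simp [Matrix.mulVec_smul, dotProduct_smul])

@[simp] lemma bilA_apply (D : ℕ) (A : Matrix (Fin D) (Fin D) ℝ) (u v : Fin D → ℝ) :
    bilA D A u v = u ⬝ᵥ A *ᵥ v := rfl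

lemma hasFDerivAt_gauss (D : ℕ) (μ : Fin D → ℝ) (S : Matrix (Fin D) (Fin D) ℝ)
    (x : Fin D → ℝ) :
    HasFDerivAt (gauss D μ S)
      ((gauss D μ S x * (-(1:ℝ)/2)) •
        (bilA D S⁻¹ (x - μ) + (bilA D S⁻¹).flip (x - μ))) x := by
  set B := bilA D S⁻¹ with hB
  set c : ℝ := (Real.sqrt ((2 * Real.pi) ^ D * S.det))⁻¹ with hc
  have hf : HasFDerivAt (fun y : Fin D → ℝ => y - μ) (ContinuousLinearMap.id ℝ _) x :=
    (hasFDerivAt_id x).sub_const μ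
  have hq : HasFDerivAt (fun y : Fin D → ℝ => B (y - μ) (y - μ))
      (B.precompR _ (x - μ) (ContinuousLinearMap.id ℝ _)
        + B.precompL _ (ContinuousLinearMap.id ℝ _) (x - μ)) x :=
    B.hasFDerivAt_of_bilinear hf hf
  set L := B.precompR (Fin D → ℝ) (x - μ) (ContinuousLinearMap.id ℝ _)
        + B.precompL _ (ContinuousLinearMap.id ℝ _) (x - μ) with hL
  have hq2 : HasFDerivAt (fun y : Fin D → ℝ => (-(1:ℝ)/2) * B (y - μ) (y - μ))
      ((-(1:ℝ)/2) • L) x := hq.const_mul _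
  have hexp := hq2.exp
  have hfin := hexp.const_mul c
  have hfun : gauss D μ S = fun y => c * Real.exp ((-(1:ℝ)/2) * B (y - μ) (y - μ)) := by
    funext y
    simp only [gauss, hB, bilA_apply, hc]
    congr 1
    ring_nf
  rw [← hfun] at hfin
  convert hfin using 1
  iterate 5 rfl
  apply ContinuousLinearMap.ext; intro v
  have harg : -((x - μ) ⬝ᵥ S⁻¹ *ᵥ (x - μ)) / 2 = (-(1:ℝ)/2) * B (x - μ) (x - μ) := by
    simp only [hB, bilA_apply]; ring
  simp only [ContinuousLinearMap.smul_apply, gauss, harg, smul_eq_mul, hc]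
  have hLv : L v = (B (x - μ) + B.flip (x - μ)) v := by
    simp [hL, ContinuousLinearMap.precompR, ContinuousLinearMap.precompL]
  rw [hLv]; ring


lemma sum_smul_dotProduct {K D : ℕ} (a : Fin K → ℝ) (u : Fin K → Fin D → ℝ)
    (w : Fin D → ℝ) :
    (∑ i, a i • u i) ⬝ᵥ w = ∑ i, a i * (u i ⬝ᵥ w) := by
  simp only [dotProduct, Finset.sum_apply, Pi.smul_apply, smul_eq_mul,
    Finset.sum_mul, Finset.mul_sum]
  rw [Finset.sum_comm]
  simp [mul_assoc]

/-- Equal-covariance case: every critical point of the mixture lies in the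
convex hull of the component means. -/
theorem critical_point_mem_convexHull_of_equal_cov
    (D K : ℕ) (w : Fin K → ℝ) (hw : ∀ i, 0 < w i) (hwsum : ∑ i, w i = 1)
    (μ : Fin K → (Fin D → ℝ)) (S : Matrix (Fin D) (Fin D) ℝ) (hS : S.PosDef)
    (xstar : Fin D → ℝ)
    (hcrit : fderiv ℝ (fun x => ∑ i, w i * gauss D (μ i) S x) xstar = 0) :
    xstar ∈ convexHull ℝ (Set.range μ) := by
  classical
  have hA : (S⁻¹).PosDef := hS.inv
  set B := bilA D S⁻¹ with hB
  -- symmetry of S⁻¹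
  have hsymm : ∀ u v : Fin D → ℝ, v ⬝ᵥ S⁻¹ *ᵥ u = u ⬝ᵥ S⁻¹ *ᵥ v := by
    intro u v
    have ht : (S⁻¹)ᵀ = S⁻¹ := by
      have := hA.1
      rwa [Matrix.IsHermitian, Matrix.conjTranspose_eq_transpose_of_trivial] at this
    rw [Matrix.dotProduct_mulVec, ← Matrix.mulVec_transpose, ht, dotProduct_comm]
  -- derivative of the mixture
  have hsum : HasFDerivAt (fun x => ∑ i, w i * gauss D (μ i) S x)
      (∑ i, w i • ((gauss D (μ i) S xstar * (-(1:ℝ)/2)) •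
        (B (xstar - μ i) + B.flip (xstar - μ i)))) xstar :=
    HasFDerivAt.fun_sum fun i _ => (hasFDerivAt_gauss D (μ i) S xstar).const_mul (w i)
  have hzero : (∑ i, w i • ((gauss D (μ i) S xstar * (-(1:ℝ)/2)) •
      (B (xstar - μ i) + B.flip (xstar - μ i)))) = 0 := hsum.fderiv.symm.trans hcrit
  set a : Fin K → ℝ := fun i => w i * gauss D (μ i) S xstar with ha
  have hapos : ∀ i, 0 < a i := by
    intro i
    have h1 : 0 < (2 * Real.pi) ^ D * S.det :=
      mul_pos (pow_pos (by positivity) D) hS.det_pos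
    have h2 : 0 < (Real.sqrt ((2 * Real.pi) ^ D * S.det))⁻¹ :=
      inv_pos.2 (Real.sqrt_pos.2 h1)
    exact mul_pos (hw i) (mul_pos h2 (Real.exp_pos _))
  set y : Fin D → ℝ := ∑ i, a i • (xstar - μ i) with hy
  -- y annihilates all vectors through S⁻¹
  have hyv : ∀ v : Fin D → ℝ, y ⬝ᵥ S⁻¹ *ᵥ v = 0 := by
    intro v
    have h0 := congrFun (congrArg (fun (L : (Fin D → ℝ) →L[ℝ] ℝ) => (L : (Fin D → ℝ) → ℝ)) hzero) v
    simp only [ContinuousLinearMap.coe_sum', Finset.sum_apply, ContinuousLinearMap.coe_smul',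
      Pi.smul_apply, ContinuousLinearMap.add_apply, ContinuousLinearMap.flip_apply,
      ContinuousLinearMap.zero_apply, hB, bilA_apply, smul_eq_mul] at h0
    rw [hy, sum_smul_dotProduct]
    have : ∀ i, a i * ((xstar - μ i) ⬝ᵥ S⁻¹ *ᵥ v)
        = - (w i * (gauss D (μ i) S xstar * (-(1:ℝ)/2) *
            ((xstar - μ i) ⬝ᵥ S⁻¹ *ᵥ v + v ⬝ᵥ S⁻¹ *ᵥ (xstar - μ i)))) := by
      intro i
      rw [hsymm (xstar - μ i) v]
      simp only [ha]; ring
    rw [Finset.sum_congr rfl fun i _ => this i, Finset.sum_neg_distrib, h0, neg_zero]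
  -- hence y = 0
  have hy0 : y = 0 := by
    by_contra h
    have := hA.dotProduct_mulVec_pos h
    rw [star_trivial] at this
    rw [hyv y] at this
    exact lt_irrefl 0 this
  -- rearrange: (∑ a) • xstar = ∑ a i • μ i
  have hT : 0 < ∑ i, a i := by
    have hne : (Finset.univ : Finset (Fin K)).Nonempty := by
      by_contra h
      rw [Finset.not_nonempty_iff_eq_empty] at h
      rw [h, Finset.sum_empty] at hwsum
      norm_num at hwsum
    exact Finset.sum_pos (fun i _ => hapos i) hne
  have hxs : (∑ i, a i) • xstar = ∑ i, a i • μ i := by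
    have : (∑ i, a i • (xstar - μ i)) = (∑ i, a i) • xstar - ∑ i, a i • μ i := by
      rw [Finset.sum_smul]
      rw [← Finset.sum_sub_distrib]
      apply Finset.sum_congr rfl
      intro i _
      rw [smul_sub]
    rw [← hy, hy0] at this
    exact (sub_eq_zero.mp this.symm)
  have hx : xstar = Finset.univ.centerMass a μ := by
    rw [Finset.centerMass, ← hxs, smul_smul, inv_mul_cancel₀ hT.ne', one_smul]
  rw [hx]
  exact Finset.centerMass_mem_convexHull _ (fun i _ => (hapos i).le) (by simpa using hT)
    (fun i _ => Set.mem_range_self i)
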